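/- Let 0<q<1, a_1,…,a_r, b_1,…,b_s ≥ 0, and assume Υ ≠ 0. Then for each n≥2 there exists M_n ≥ 0 such that for all x>M_n, F_n(x;q) has the same sign as Υ·(log q)^n. -/

import Mathlib

open Real Set

/-- The infinite q-Pochhammer symbol `(a;q)_∞ = ∏_{k≥0} (1 - a q^k)`. -/
noncomputable def qPochInf (a q : ℝ) : ℝ := ∏' k : ℕ, (1 - a * q ^ k)

/-- Jackson's q-gamma function for `0 < q < 1`. -/
noncomputable def qGamma (q x : ℝ) : ℝ :=
  qPochInf q q / qPochInf (q ^ x) q * (1 - q) ^ (1 - x)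


lemma sum_aux {t : ℝ} (h0 : 0 < t) (h1 : t < 1) (p c : ℕ) :
    Summable (fun m : ℕ => ((m : ℝ) + (c : ℝ)) ^ p * t ^ m) := by
  have hb : Summable (fun m : ℕ => (m : ℝ) ^ p * t ^ m) :=
    summable_pow_mul_geometric_of_norm_lt_one p
      (by rwa [Real.norm_eq_abs, abs_of_nonneg h0.le])
  have h2 : Summable (fun m : ℕ => ((m + c : ℕ) : ℝ) ^ p * t ^ (m + c)) :=
    (summable_nat_add_iff c).2 hb
  have h3 := h2.mul_right ((t ^ c)⁻¹)
  refine h3.congr fun m => ?_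
  push_cast
  rw [pow_add]
  field_simp

noncomputable def termD (q : ℝ) (N m : ℕ) (x : ℝ) : ℝ :=
  (((m : ℝ) + 1) * Real.log q) ^ N / (((m : ℝ) + 1) * (1 - q ^ (m + 1))) *
    Real.exp ((((m : ℝ) + 1) * Real.log q) * x)

noncomputable def qS (q : ℝ) (N : ℕ) (x : ℝ) : ℝ := ∑' m, termD q N m x


lemma hL {q : ℝ} (hq0 : 0 < q) (hq1 : q < 1) : Real.log q < 0 := Real.log_neg hq0 hq1

lemma denom_ge {q : ℝ} (hq0 : 0 < q) (hq1 : q < 1) (m : ℕ) :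
    1 - q ≤ ((m : ℝ) + 1) * (1 - q ^ (m + 1)) := by
  have h1 : q ^ (m + 1) ≤ q := by
    calc q ^ (m + 1) ≤ q ^ 1 := pow_le_pow_of_le_one hq0.le hq1.le (by omega)
    _ = q := pow_one q
  nlinarith [pow_pos hq0 (m + 1), pow_le_one₀ hq0.le hq1.le (n := m + 1)]

lemma exp_term_eq (q : ℝ) (m : ℕ) (x : ℝ) :
    Real.exp ((((m : ℝ) + 1) * Real.log q) * x) = Real.exp (Real.log q * x) ^ (m + 1) := by
  rw [← Real.exp_nat_mul]
  congr 1
  push_cast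
  ring

lemma termD_bound {q : ℝ} (hq0 : 0 < q) (hq1 : q < 1) {ε x : ℝ} (hε : 0 < ε) (hx : ε ≤ x) (N m : ℕ) :
    |termD q N m x| ≤ (((m : ℝ) + 1)) ^ N * Real.exp (Real.log q * ε) ^ (m + 1) *
      (|Real.log q| ^ N / (1 - q)) := by
  have hq' : (0:ℝ) < 1 - q := by linarith
  have hden := denom_ge hq0 hq1 m
  have hm1 : (0:ℝ) < (m : ℝ) + 1 := by positivity
  rw [termD, abs_mul, abs_div]
  have h1 : |(((m : ℝ) + 1) * Real.log q) ^ N| = (((m : ℝ) + 1)) ^ N * |Real.log q| ^ N := by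
    rw [abs_pow, abs_mul, mul_pow, abs_of_pos hm1]
  have h2 : |((m : ℝ) + 1) * (1 - q ^ (m + 1))| = ((m : ℝ) + 1) * (1 - q ^ (m + 1)) :=
    abs_of_pos (lt_of_lt_of_le hq' hden)
  have h3 : |Real.exp ((((m : ℝ) + 1) * Real.log q) * x)| ≤ Real.exp (Real.log q * ε) ^ (m + 1) := by
    rw [abs_of_pos (Real.exp_pos _), exp_term_eq]
    exact pow_le_pow_left₀ (Real.exp_pos _).le
      (Real.exp_le_exp.2 (by nlinarith [hL hq0 hq1])) _
  rw [h1, h2]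
  have h4 : (((m : ℝ) + 1)) ^ N * |Real.log q| ^ N / (((m : ℝ) + 1) * (1 - q ^ (m + 1))) ≤
      (((m : ℝ) + 1)) ^ N * |Real.log q| ^ N / (1 - q) := by
    apply div_le_div_of_nonneg_left (by positivity) hq' hden
  calc _ ≤ (((m : ℝ) + 1)) ^ N * |Real.log q| ^ N / (1 - q) * Real.exp (Real.log q * ε) ^ (m + 1) := by
        apply mul_le_mul h4 h3 (abs_nonneg _) (by positivity)
  _ = _ := by ring

lemma summable_bound {q : ℝ} (hq0 : 0 < q) (hq1 : q < 1) {ε : ℝ} (hε : 0 < ε) (N : ℕ) :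
    Summable (fun m : ℕ => (((m : ℝ) + 1)) ^ N * Real.exp (Real.log q * ε) ^ (m + 1) *
      (|Real.log q| ^ N / (1 - q))) := by
  have he0 : 0 < Real.exp (Real.log q * ε) := Real.exp_pos _
  have he1 : Real.exp (Real.log q * ε) < 1 := by
    rw [Real.exp_lt_one_iff]
    exact mul_neg_of_neg_of_pos (hL hq0 hq1) hε
  have := ((sum_aux he0 he1 N 1).mul_right (Real.exp (Real.log q * ε))).mul_right
    (|Real.log q| ^ N / (1 - q))
  refine this.congr fun m => ?_
  push_cast
  rw [pow_succ]
  ring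

lemma summable_termD {q : ℝ} (hq0 : 0 < q) (hq1 : q < 1) {x : ℝ} (hx : 0 < x) (N : ℕ) :
    Summable (fun m : ℕ => termD q N m x) :=
  Summable.of_norm_bounded (summable_bound hq0 hq1 hx N)
    fun m => termD_bound hq0 hq1 hx le_rfl N m

lemma hasDerivAt_termD (q : ℝ) (N m : ℕ) (y : ℝ) :
    HasDerivAt (fun x => termD q N m x) (termD q (N + 1) m y) y := by
  have h : HasDerivAt (fun x => Real.exp ((((m : ℝ) + 1) * Real.log q) * x))
      ((((m : ℝ) + 1) * Real.log q) * Real.exp ((((m : ℝ) + 1) * Real.log q) * y)) y := by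
    simpa [mul_comm] using ((hasDerivAt_id y).const_mul (((m : ℝ) + 1) * Real.log q)).exp
  have := h.const_mul ((((m : ℝ) + 1) * Real.log q) ^ N / (((m : ℝ) + 1) * (1 - q ^ (m + 1))))
  refine this.congr_deriv ?_
  rw [termD, pow_succ]
  ring

lemma hasDerivAt_qS {q : ℝ} (hq0 : 0 < q) (hq1 : q < 1) (N : ℕ) {x : ℝ} (hx : 0 < x) :
    HasDerivAt (qS q N) (qS q (N + 1) x) x := by
  have hx2 : 0 < x / 2 := by linarith
  refine hasDerivAt_tsum_of_isPreconnected (summable_bound hq0 hq1 hx2 (N + 1))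
    (isOpen_Ioi (a := x / 2)) (isPreconnected_Ioi)
    (fun m y _ => hasDerivAt_termD q N m y) (fun m y hy => ?_) (mem_Ioi.2 (by linarith))
    (summable_termD hq0 hq1 hx N) (mem_Ioi.2 (by linarith))
  exact termD_bound hq0 hq1 hx2 (le_of_lt hy) (N + 1) m


section Poch
variable {q u : ℝ}

lemma fact_pos (hq0 : 0 < q) (hq1 : q < 1) (hu0 : 0 ≤ u) (hu1 : u < 1) (k : ℕ) :
    0 < 1 - u * q ^ k := by
  have h1 : q ^ k ≤ 1 := pow_le_one₀ hq0.le hq1.le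
  nlinarith [pow_pos hq0 k]

lemma G_hasSum (hq0 : 0 < q) (hq1 : q < 1) (hu0 : 0 ≤ u) (hu1 : u < 1) (k : ℕ) :
    HasSum (fun m : ℕ => (u * q ^ k) ^ (m + 1) / ((m : ℝ) + 1)) (-Real.log (1 - u * q ^ k)) := by
  apply Real.hasSum_pow_div_log_of_abs_lt_one
  have h1 : q ^ k ≤ 1 := pow_le_one₀ hq0.le hq1.le
  rw [abs_of_nonneg (by positivity)]
  nlinarith [pow_pos hq0 k]

lemma G_le (hq0 : 0 < q) (hq1 : q < 1) (hu0 : 0 ≤ u) (hu1 : u < 1) (k m : ℕ) :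
    (u * q ^ k) ^ (m + 1) / ((m : ℝ) + 1) ≤ u ^ (m + 1) * q ^ k := by
  have h1 : q ^ k ≤ 1 := pow_le_one₀ hq0.le hq1.le
  have h2 : (0:ℝ) < q ^ k := pow_pos hq0 k
  have h3 : (u * q ^ k) ^ (m + 1) / ((m : ℝ) + 1) ≤ (u * q ^ k) ^ (m + 1) := by
    apply div_le_self (by positivity) (by push_cast; linarith [Nat.cast_nonneg (α := ℝ) m])
  refine h3.trans ?_
  rw [mul_pow]
  have h4 : (q ^ k) ^ (m + 1) ≤ q ^ k := by
    calc (q ^ k) ^ (m + 1) ≤ (q ^ k) ^ 1 := pow_le_pow_of_le_one h2.le h1 (by omega)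
    _ = q ^ k := pow_one _
  exact mul_le_mul_of_nonneg_left h4 (by positivity)

lemma neg_log_le (hq0 : 0 < q) (hq1 : q < 1) (hu0 : 0 ≤ u) (hu1 : u < 1) (k : ℕ) :
    -Real.log (1 - u * q ^ k) ≤ u / (1 - u) * q ^ k := by
  have hgeo : Summable (fun m : ℕ => u ^ (m + 1) * q ^ k) := by
    apply Summable.mul_right
    exact (summable_geometric_of_lt_one hu0 hu1).comp_injective (add_left_injective 1)
  have h := Summable.tsum_le_tsum (G_le hq0 hq1 hu0 hu1 k) (G_hasSum hq0 hq1 hu0 hu1 k).summable hgeo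
  rw [(G_hasSum hq0 hq1 hu0 hu1 k).tsum_eq] at h
  refine h.trans ?_
  rw [tsum_mul_right]
  apply mul_le_mul_of_nonneg_right _ (by positivity)
  have : ∑' m : ℕ, u ^ (m + 1) = u * ∑' m : ℕ, u ^ m := by
    rw [← tsum_mul_left]
    exact tsum_congr fun m => by rw [pow_succ]; ring
  rw [this, tsum_geometric_of_lt_one hu0 hu1, div_eq_mul_inv]

lemma summable_neg_log (hq0 : 0 < q) (hq1 : q < 1) (hu0 : 0 ≤ u) (hu1 : u < 1) :
    Summable (fun k : ℕ => -Real.log (1 - u * q ^ k)) := by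
  apply Summable.of_nonneg_of_le (fun k => ?_) (neg_log_le hq0 hq1 hu0 hu1)
    (((summable_geometric_of_lt_one hq0.le hq1)).mul_left _)
  rw [neg_nonneg]
  apply Real.log_nonpos (fact_pos hq0 hq1 hu0 hu1 k).le
  nlinarith [pow_pos hq0 k, pow_le_one₀ hq0.le hq1.le (n := k)]

lemma summable_log (hq0 : 0 < q) (hq1 : q < 1) (hu0 : 0 ≤ u) (hu1 : u < 1) :
    Summable (fun k : ℕ => Real.log (1 - u * q ^ k)) := by
  simpa using (summable_neg_log hq0 hq1 hu0 hu1).neg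

lemma G_summable (hq0 : 0 < q) (hq1 : q < 1) (hu0 : 0 ≤ u) (hu1 : u < 1) :
    Summable (Function.uncurry (fun k m : ℕ => (u * q ^ k) ^ (m + 1) / ((m : ℝ) + 1))) := by
  refine (summable_prod_of_nonneg ?_).2 ⟨fun k => ?_, ?_⟩
  · intro p; simp only [Function.uncurry]; positivity
  · exact (G_hasSum hq0 hq1 hu0 hu1 k).summable
  · simp only [Function.uncurry]
    apply Summable.of_nonneg_of_le (fun k => ?_) (fun k => ?_)
      (((summable_geometric_of_lt_one hq0.le hq1)).mul_left (u / (1-u)))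
    · exact tsum_nonneg fun m => by positivity
    · rw [(G_hasSum hq0 hq1 hu0 hu1 k).tsum_eq]
      exact neg_log_le hq0 hq1 hu0 hu1 k

lemma innerSumG (hq0 : 0 < q) (hq1 : q < 1) (hu0 : 0 ≤ u) (hu1 : u < 1) (m : ℕ) :
    ∑' k : ℕ, (u * q ^ k) ^ (m + 1) / ((m : ℝ) + 1)
      = u ^ (m + 1) / (((m : ℝ) + 1) * (1 - q ^ (m + 1))) := by
  have hqm0 : (0:ℝ) ≤ q ^ (m + 1) := by positivity
  have hqm1 : q ^ (m + 1) < 1 := pow_lt_one₀ hq0.le hq1 (by omega)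
  have h1 : ∀ k : ℕ, (u * q ^ k) ^ (m + 1) / ((m : ℝ) + 1)
      = u ^ (m + 1) / ((m : ℝ) + 1) * (q ^ (m + 1)) ^ k := by
    intro k
    rw [mul_pow, ← pow_mul, ← pow_mul, Nat.mul_comm]
    ring
  rw [tsum_congr h1, tsum_mul_left, tsum_geometric_of_lt_one hqm0 hqm1]
  have hm : ((m : ℝ) + 1) ≠ 0 := by positivity
  have : (1 - q ^ (m+1)) ≠ 0 := by linarith
  field_simp

lemma log_poch_eq (hq0 : 0 < q) (hq1 : q < 1) (hu0 : 0 ≤ u) (hu1 : u < 1) :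
    ∑' k : ℕ, Real.log (1 - u * q ^ k)
      = -∑' m : ℕ, u ^ (m + 1) / (((m : ℝ) + 1) * (1 - q ^ (m + 1))) := by
  have hG := G_summable hq0 hq1 hu0 hu1
  have hswap : ∑' k : ℕ, ∑' m : ℕ, (u * q ^ k) ^ (m + 1) / ((m : ℝ) + 1)
      = ∑' m : ℕ, ∑' k : ℕ, (u * q ^ k) ^ (m + 1) / ((m : ℝ) + 1) :=
    Summable.tsum_comm' hG.prod_symm (fun b => hG.prod_symm.prod_factor b) fun c => hG.prod_factor c
  have h1 : ∑' k : ℕ, Real.log (1 - u * q ^ k)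
      = -∑' k : ℕ, ∑' m : ℕ, (u * q ^ k) ^ (m + 1) / ((m : ℝ) + 1) := by
    rw [tsum_congr (fun k => (G_hasSum hq0 hq1 hu0 hu1 k).tsum_eq), ← tsum_neg]
    exact tsum_congr fun k => by ring
  rw [h1, hswap, tsum_congr (innerSumG hq0 hq1 hu0 hu1)]

lemma qPochInf_eq_exp (hq0 : 0 < q) (hq1 : q < 1) (hu0 : 0 ≤ u) (hu1 : u < 1) :
    qPochInf u q = Real.exp (∑' k : ℕ, Real.log (1 - u * q ^ k)) := by
  have h2 := Real.rexp_tsum_eq_tprod (f := fun k : ℕ => 1 - u * q ^ k)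
    (fun k => fact_pos hq0 hq1 hu0 hu1 k) (summable_log hq0 hq1 hu0 hu1)
  rw [qPochInf, ← h2]

lemma qPochInf_pos (hq0 : 0 < q) (hq1 : q < 1) (hu0 : 0 ≤ u) (hu1 : u < 1) :
    0 < qPochInf u q := by
  rw [qPochInf_eq_exp hq0 hq1 hu0 hu1]; exact Real.exp_pos _

lemma log_qPochInf (hq0 : 0 < q) (hq1 : q < 1) (hu0 : 0 ≤ u) (hu1 : u < 1) :
    Real.log (qPochInf u q)
      = -∑' m : ℕ, u ^ (m + 1) / (((m : ℝ) + 1) * (1 - q ^ (m + 1))) := by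
  rw [qPochInf_eq_exp hq0 hq1 hu0 hu1, Real.log_exp, log_poch_eq hq0 hq1 hu0 hu1]

end Poch

section QG
variable {q : ℝ}

lemma rpow_mem (hq0 : 0 < q) (hq1 : q < 1) {y : ℝ} (hy : 0 < y) :
    0 < q ^ y ∧ q ^ y < 1 :=
  ⟨Real.rpow_pos_of_pos hq0 y, Real.rpow_lt_one hq0.le hq1 hy⟩

lemma qS_zero_eq (hq0 : 0 < q) (hq1 : q < 1) {y : ℝ} (hy : 0 < y) :
    ∑' m : ℕ, (q ^ y) ^ (m + 1) / (((m : ℝ) + 1) * (1 - q ^ (m + 1))) = qS q 0 y := by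
  rw [qS]
  refine tsum_congr fun m => ?_
  rw [termD, pow_zero, exp_term_eq, ← Real.rpow_def_of_pos hq0 y]
  ring

lemma qGamma_pos (hq0 : 0 < q) (hq1 : q < 1) {y : ℝ} (hy : 0 < y) :
    0 < qGamma q y := by
  have h1 := qPochInf_pos hq0 hq1 hq0.le hq1
  have h2 := qPochInf_pos hq0 hq1 (rpow_mem hq0 hq1 hy).1.le (rpow_mem hq0 hq1 hy).2
  have h3 : (0:ℝ) < (1 - q) ^ (1 - y) := Real.rpow_pos_of_pos (by linarith) _
  rw [qGamma]
  positivity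

lemma log_qGamma (hq0 : 0 < q) (hq1 : q < 1) {y : ℝ} (hy : 0 < y) :
    Real.log (qGamma q y)
      = Real.log (qPochInf q q) + (1 - y) * Real.log (1 - q) + qS q 0 y := by
  have h1 := qPochInf_pos hq0 hq1 hq0.le hq1
  have h2 := qPochInf_pos hq0 hq1 (rpow_mem hq0 hq1 hy).1.le (rpow_mem hq0 hq1 hy).2
  have hq' : (0:ℝ) < 1 - q := by linarith
  rw [qGamma, Real.log_mul (by positivity) (by positivity),
    Real.log_div h1.ne' h2.ne', Real.log_rpow hq',
    log_qPochInf hq0 hq1 (rpow_mem hq0 hq1 hy).1.le (rpow_mem hq0 hq1 hy).2,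
    qS_zero_eq hq0 hq1 hy]
  ring

end QG

lemma iter_deriv (g : ℝ → ℝ) (u : ℕ → ℝ → ℝ) (h0 : ∀ x, 0 < x → g x = u 0 x)
    (hd : ∀ k x, 0 < x → HasDerivAt (u k) (u (k + 1) x) x) :
    ∀ n x, 0 < x → iteratedDeriv n g x = u n x := by
  intro n
  induction n with
  | zero => intro x hx; simpa using h0 x hx
  | succ n ih =>
    intro x hx
    rw [iteratedDeriv_succ]
    have hev : iteratedDeriv n g =ᶠ[nhds x] u n :=
      Filter.eventuallyEq_of_mem (Ioi_mem_nhds hx) (fun y hy => ih y hy)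
    rw [hev.deriv_eq, (hd n x hx).deriv]

noncomputable def baseAux (q C Lq : ℝ) (N : ℕ) (c x : ℝ) : ℝ :=
  (if N = 0 then C + (1 - (x + c)) * Lq else if N = 1 then -Lq else 0) + qS q N (x + c)

noncomputable def uAux (q C Lq : ℝ) {r s : ℕ} (a : Fin r → ℝ) (b : Fin s → ℝ)
    (N : ℕ) (x : ℝ) : ℝ :=
  (∑ i, baseAux q C Lq N (a i) x) - ∑ j, baseAux q C Lq N (b j) x

lemma hasDerivAt_baseAux {q : ℝ} (hq0 : 0 < q) (hq1 : q < 1) (C Lq : ℝ) (N : ℕ) {c x : ℝ}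
    (hc : 0 ≤ c) (hx : 0 < x) :
    HasDerivAt (fun y => baseAux q C Lq N c y) (baseAux q C Lq (N + 1) c x) x := by
  have hqs : HasDerivAt (fun y => qS q N (y + c)) (qS q (N + 1) (x + c)) x := by
    simpa [Function.comp_def] using (hasDerivAt_qS hq0 hq1 N (show 0 < x + c by linarith)).comp x
      ((hasDerivAt_id x).add_const c)
  match N with
  | 0 =>
    simp only [baseAux, if_pos rfl, if_neg one_ne_zero, if_pos rfl]
    have h1 : HasDerivAt (fun y : ℝ => C + (1 - (y + c)) * Lq) (-Lq) x := by
      have h2 := (((hasDerivAt_id x).add_const c).const_sub 1).mul_const Lq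
      simpa using (hasDerivAt_const x C).fun_add h2
    exact h1.add hqs
  | 1 =>
    simp only [baseAux, if_neg one_ne_zero, if_pos rfl]
    norm_num
    simpa using (hasDerivAt_const x (-Lq)).fun_add hqs
  | (m + 2) =>
    simp only [baseAux]
    norm_num
    simpa using (hasDerivAt_const x (0:ℝ)).fun_add hqs

lemma hasDerivAt_uAux {q : ℝ} (hq0 : 0 < q) (hq1 : q < 1) (C Lq : ℝ) {r s : ℕ}
    (a : Fin r → ℝ) (b : Fin s → ℝ) (ha : ∀ i, 0 ≤ a i) (hb : ∀ j, 0 ≤ b j) (N : ℕ)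
    {x : ℝ} (hx : 0 < x) :
    HasDerivAt (uAux q C Lq a b N) (uAux q C Lq a b (N + 1) x) x := by
  unfold uAux
  exact (HasDerivAt.fun_sum fun i _ => hasDerivAt_baseAux hq0 hq1 C Lq N (ha i) hx).sub
    (HasDerivAt.fun_sum fun j _ => hasDerivAt_baseAux hq0 hq1 C Lq N (hb j) hx)

lemma uAux_eq_of_two_le {q C Lq : ℝ} {r s : ℕ} (a : Fin r → ℝ) (b : Fin s → ℝ) {N : ℕ}
    (hN : 2 ≤ N) (x : ℝ) :
    uAux q C Lq a b N x = (∑ i, qS q N (x + a i)) - ∑ j, qS q N (x + b j) := by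
  unfold uAux baseAux
  simp only [if_neg (show ¬ N = 0 by omega), if_neg (show ¬ N = 1 by omega)]
  simp

lemma log_ratio_eq {q : ℝ} (hq0 : 0 < q) (hq1 : q < 1) {r s : ℕ}
    (a : Fin r → ℝ) (b : Fin s → ℝ) (ha : ∀ i, 0 ≤ a i) (hb : ∀ j, 0 ≤ b j)
    {x : ℝ} (hx : 0 < x) :
    Real.log ((∏ i, qGamma q (x + a i)) / ∏ j, qGamma q (x + b j))
      = uAux q (Real.log (qPochInf q q)) (Real.log (1 - q)) a b 0 x := by
  have hga : ∀ i : Fin r, 0 < qGamma q (x + a i) := fun i =>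
    qGamma_pos hq0 hq1 (by linarith [ha i])
  have hgb : ∀ j : Fin s, 0 < qGamma q (x + b j) := fun j =>
    qGamma_pos hq0 hq1 (by linarith [hb j])
  have hpa : (0:ℝ) < ∏ i, qGamma q (x + a i) := Finset.prod_pos fun i _ => hga i
  have hpb : (0:ℝ) < ∏ j, qGamma q (x + b j) := Finset.prod_pos fun j _ => hgb j
  rw [Real.log_div hpa.ne' hpb.ne', Real.log_prod (fun i _ => (hga i).ne'),
    Real.log_prod (fun j _ => (hgb j).ne')]
  unfold uAux baseAux
  simp only [reduceIte]
  congr 1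
  · exact Finset.sum_congr rfl fun i _ => log_qGamma hq0 hq1 (by linarith [ha i])
  · exact Finset.sum_congr rfl fun j _ => log_qGamma hq0 hq1 (by linarith [hb j])

set_option maxHeartbeats 1000000 in
lemma final_est {q : ℝ} (hq0 : 0 < q) (hq1 : q < 1) {r s : ℕ} (a : Fin r → ℝ) (b : Fin s → ℝ)
    (ha : ∀ i, 0 ≤ a i) (hb : ∀ j, 0 ≤ b j) {Υ : ℝ}
    (hΥdef : Υ = (∑ i, q ^ a i) - (∑ j, q ^ b j)) (hΥ : Υ ≠ 0) (n : ℕ) :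
    ∃ M : ℝ, 1 ≤ M ∧ ∀ x > M,
      0 < ((∑ i, qS q n (x + a i)) - ∑ j, qS q n (x + b j)) * (Υ * Real.log q ^ n) := by
  obtain ⟨L, hLdef⟩ : ∃ y, y = Real.log q := ⟨_, rfl⟩
  have hL0 : L < 0 := hLdef ▸ Real.log_neg hq0 hq1
  have hLne : L ≠ 0 := ne_of_lt hL0
  have h1q : (0:ℝ) < 1 - q := by linarith
  have habsΥ : 0 < |Υ| := abs_pos.2 hΥ
  obtain ⟨S, hSdef⟩ : ∃ y, y = ∑' m : ℕ, ((m : ℝ) + 2) ^ n * q ^ m := ⟨_, rfl⟩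
  have hS : Summable (fun m : ℕ => ((m : ℝ) + 2) ^ n * q ^ m) := sum_aux hq0 hq1 n 2
  have hSnn : 0 ≤ S := hSdef ▸ tsum_nonneg fun m => by positivity
  obtain ⟨δ, hδdef⟩ : ∃ y, y = |Υ| / (((r : ℝ) + s) * S + 1) := ⟨_, rfl⟩
  have hrs : (0:ℝ) ≤ ((r : ℝ) + s) * S := by positivity
  have hδ : 0 < δ := hδdef ▸ div_pos habsΥ (by linarith)
  refine ⟨max 1 (Real.log δ / L), le_max_left _ _, fun x hx => ?_⟩
  have hx1 : 1 < x := lt_of_le_of_lt (le_max_left _ _) hx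
  have hx0 : 0 < x := by linarith
  obtain ⟨E, hEdef⟩ : ∃ y, y = Real.exp (L * x) := ⟨_, rfl⟩
  have hE0 : 0 < E := hEdef ▸ Real.exp_pos _
  have hEq : E ≤ q := by
    rw [hEdef]
    calc Real.exp (L * x) ≤ Real.exp (L * 1) :=
      Real.exp_le_exp.2 (by nlinarith)
    _ = q := by rw [mul_one, hLdef, Real.exp_log hq0]
  have hE1 : E < 1 := lt_of_le_of_lt hEq hq1
  have hEδ : E < δ := by
    have h1 : Real.log δ / L < x := lt_of_le_of_lt (le_max_right _ _) hx
    have h2 : x * L < Real.log δ := (div_lt_iff_of_neg hL0).mp h1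
    rw [hEdef, ← Real.exp_log hδ]
    exact Real.exp_lt_exp.2 (by linarith)
  obtain ⟨W, hWdef⟩ : ∃ y : ℕ → ℝ,
      y = fun m => (∑ i, termD q n m (x + a i)) - ∑ j, termD q n m (x + b j) := ⟨_, rfl⟩
  have hsumA : Summable (fun m => ∑ i, termD q n m (x + a i)) :=
    summable_sum fun i _ => summable_termD hq0 hq1 (by linarith [ha i]) n
  have hsumB : Summable (fun m => ∑ j, termD q n m (x + b j)) :=
    summable_sum fun j _ => summable_termD hq0 hq1 (by linarith [hb j]) n
  have hsumW : Summable W := hWdef ▸ hsumA.sub hsumB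
  have huW : (∑ i, qS q n (x + a i)) - ∑ j, qS q n (x + b j) = ∑' m, W m := by
    simp only [qS, hWdef]
    rw [← Summable.tsum_finsetSum (fun i _ => summable_termD hq0 hq1 (by linarith [ha i]) n),
      ← Summable.tsum_finsetSum (fun j _ => summable_termD hq0 hq1 (by linarith [hb j]) n),
      ← Summable.tsum_sub hsumA hsumB]
  have hsplit : ∑' m, W m = W 0 + ∑' m, W (m + 1) := Summable.tsum_eq_zero_add hsumW
  have hterm0 : ∀ c : ℝ, termD q n 0 (x + c) = L ^ n / (1 - q) * E * q ^ c := by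
    intro c
    rw [termD, ← hLdef]
    norm_num
    rw [show L * (x + c) = L * x + L * c by ring, Real.exp_add,
      Real.rpow_def_of_pos hq0 c, ← hLdef, ← hEdef]
    ring
  have hW0 : W 0 = L ^ n / (1 - q) * E * Υ := by
    rw [hWdef]
    simp only [hterm0]
    rw [← Finset.mul_sum, ← Finset.mul_sum, ← mul_sub, ← hΥdef]
  obtain ⟨CC, hCCdef⟩ : ∃ y, y = |L| ^ n / (1 - q) := ⟨_, rfl⟩
  have hCC0 : 0 ≤ CC := hCCdef ▸ by positivity
  obtain ⟨g, hgdef⟩ : ∃ y : ℕ → ℝ,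
      y = fun m : ℕ => ((r : ℝ) + s) * (((m : ℝ) + 2) ^ n * E ^ (m + 2)) * CC := ⟨_, rfl⟩
  have htailb : ∀ m : ℕ, |W (m + 1)| ≤ g m := by
    intro m
    have hbd : ∀ c : ℝ, 0 ≤ c →
        |termD q n (m + 1) (x + c)| ≤ ((m : ℝ) + 2) ^ n * E ^ (m + 2) * CC := by
      intro c hc
      have h5 := termD_bound hq0 hq1 hx0 (show x ≤ x + c by linarith) n (m + 1)
      rw [hEdef, hCCdef, hLdef]
      convert h5 using 3 <;> push_cast <;> ring
    rw [hWdef, hgdef]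
    simp only
    calc |∑ i, termD q n (m+1) (x + a i) - ∑ j, termD q n (m+1) (x + b j)|
        ≤ |∑ i, termD q n (m + 1) (x + a i)| + |∑ j, termD q n (m + 1) (x + b j)| :=
          abs_sub _ _
    _ ≤ (∑ i, |termD q n (m + 1) (x + a i)|) + ∑ j, |termD q n (m + 1) (x + b j)| := by
          gcongr <;> exact Finset.abs_sum_le_sum_abs _ _
    _ ≤ (∑ _i : Fin r, ((m : ℝ) + 2) ^ n * E ^ (m + 2) * CC)
          + ∑ _j : Fin s, ((m : ℝ) + 2) ^ n * E ^ (m + 2) * CC := by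
          gcongr with i _ j _
          · exact hbd (a i) (ha i)
          · exact hbd (b j) (hb j)
    _ = ((r : ℝ) + s) * (((m : ℝ) + 2) ^ n * E ^ (m + 2)) * CC := by
          simp [Finset.sum_const]
          ring
  have hg : Summable g := by
    have h1 : Summable (fun m : ℕ => ((m : ℝ) + 2) ^ n * E ^ m) := sum_aux hE0 hE1 n 2
    refine ((h1.mul_left (((r : ℝ) + s))).mul_right (E ^ 2 * CC)).congr fun m => ?_
    rw [hgdef]
    simp only
    rw [pow_add]
    ring
  have habsW : Summable (fun m => |W (m + 1)|) :=
    Summable.of_nonneg_of_le (fun m => abs_nonneg _) htailb hg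
  have hGsum : ∑' m, g m ≤ E ^ 2 * (((r : ℝ) + s) * S * CC) := by
    have hle : ∀ m : ℕ, g m ≤ (((r : ℝ) + s) * CC * E ^ 2) * (((m : ℝ) + 2) ^ n * q ^ m) := by
      intro m
      rw [hgdef]
      simp only
      have hEm : E ^ m ≤ q ^ m := pow_le_pow_left₀ hE0.le hEq m
      calc ((r : ℝ) + s) * (((m : ℝ) + 2) ^ n * E ^ (m + 2)) * CC
          = (((r : ℝ) + s) * CC * E ^ 2 * ((m : ℝ) + 2) ^ n) * E ^ m := by rw [pow_add]; ring
      _ ≤ (((r : ℝ) + s) * CC * E ^ 2 * ((m : ℝ) + 2) ^ n) * q ^ m := by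
          apply mul_le_mul_of_nonneg_left hEm (by positivity)
      _ = (((r : ℝ) + s) * CC * E ^ 2) * (((m : ℝ) + 2) ^ n * q ^ m) := by ring
    calc ∑' m, g m
        ≤ ∑' m : ℕ, (((r : ℝ) + s) * CC * E ^ 2) * (((m : ℝ) + 2) ^ n * q ^ m) :=
          Summable.tsum_le_tsum hle hg (hS.mul_left _)
    _ = (((r : ℝ) + s) * CC * E ^ 2) * S := by rw [tsum_mul_left, ← hSdef]
    _ = E ^ 2 * (((r : ℝ) + s) * S * CC) := by ring
  have hT : |∑' m, W (m + 1)| ≤ E ^ 2 * (((r : ℝ) + s) * S * CC) := by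
    have h1 : Summable (fun m => ‖W (m + 1)‖) := by
      simpa [Real.norm_eq_abs] using habsW
    have h2 := norm_tsum_le_tsum_norm h1
    simp only [Real.norm_eq_abs] at h2
    exact h2.trans ((Summable.tsum_le_tsum htailb habsW hg).trans hGsum)
  obtain ⟨P, hPdef⟩ : ∃ y, y = L ^ n := ⟨_, rfl⟩
  have hPne : P ≠ 0 := hPdef ▸ pow_ne_zero _ hLne
  have habsP : 0 < |P| := abs_pos.2 hPne
  have habsPL : |L| ^ n = |P| := by rw [hPdef, abs_pow]
  obtain ⟨T, hTdef⟩ : ∃ y, y = ∑' m, W (m + 1) := ⟨_, rfl⟩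
  have hlt : E * (((r : ℝ) + s) * S) < |Υ| := by
    have h1 : E * (((r : ℝ) + s) * S + 1) < δ * (((r : ℝ) + s) * S + 1) :=
      mul_lt_mul_of_pos_right hEδ (by linarith)
    have h2 : δ * (((r : ℝ) + s) * S + 1) = |Υ| := by
      rw [hδdef]; field_simp
    nlinarith
  have key : |T * (Υ * P)| < (P / (1 - q) * E * Υ) * (Υ * P) := by
    have hrhs : (P / (1 - q) * E * Υ) * (Υ * P) = E * |Υ| ^ 2 * |P| ^ 2 / (1 - q) := by
      rw [sq_abs, sq_abs]; ring
    have hCCP : CC = |P| / (1 - q) := by rw [hCCdef, habsPL]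
    have h1 : |T * (Υ * P)| ≤ (E ^ 2 * (((r : ℝ) + s) * S * (|P| / (1 - q)))) * (|Υ| * |P|) := by
      rw [abs_mul, abs_mul]
      apply mul_le_mul_of_nonneg_right _ (by positivity)
      rw [← hCCP, hTdef]
      exact hT
    have h2 : (E ^ 2 * (((r : ℝ) + s) * S * (|P| / (1 - q)))) * (|Υ| * |P|)
        = (E * (((r : ℝ) + s) * S)) * (E * |Υ| * |P| ^ 2 / (1 - q)) := by ring
    have h3 : (E * (((r : ℝ) + s) * S)) * (E * |Υ| * |P| ^ 2 / (1 - q))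
        < |Υ| * (E * |Υ| * |P| ^ 2 / (1 - q)) :=
      mul_lt_mul_of_pos_right hlt (by positivity)
    rw [hrhs]
    calc |T * (Υ * P)| ≤ _ := h1
    _ = _ := h2
    _ < _ := h3
    _ = E * |Υ| ^ 2 * |P| ^ 2 / (1 - q) := by ring
  rw [huW, hsplit, hW0, ← hLdef, ← hPdef, ← hTdef]
  obtain ⟨hk1, hk2⟩ := abs_lt.mp key
  nlinarith [hk1]

theorem stmt2 (q : ℝ) (hq0 : 0 < q) (hq1 : q < 1) (r s : ℕ)
    (a : Fin r → ℝ) (b : Fin s → ℝ) (ha : ∀ i, 0 ≤ a i) (hb : ∀ j, 0 ≤ b j)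
    (Υ : ℝ) (hΥdef : Υ = (∑ i, q ^ a i) - (∑ j, q ^ b j)) (hΥ : Υ ≠ 0)
    (F : ℕ → ℝ → ℝ)
    (hF : F = fun n x => iteratedDeriv n
      (fun y => Real.log ((∏ i, qGamma q (y + a i)) / ∏ j, qGamma q (y + b j))) x) :
    ∀ n : ℕ, 2 ≤ n → ∃ M : ℝ, 0 ≤ M ∧ ∀ x > M,
      0 < F n x * (Υ * Real.log q ^ n) := by
  intro n hn
  obtain ⟨M, hM1, hM⟩ := final_est hq0 hq1 a b ha hb hΥdef hΥ n
  refine ⟨M, by linarith, fun x hx => ?_⟩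
  have hx0 : 0 < x := by linarith
  have hiter := iter_deriv
    (fun y => Real.log ((∏ i, qGamma q (y + a i)) / ∏ j, qGamma q (y + b j)))
    (uAux q (Real.log (qPochInf q q)) (Real.log (1 - q)) a b)
    (fun y hy => log_ratio_eq hq0 hq1 a b ha hb hy)
    (fun k y hy => hasDerivAt_uAux hq0 hq1 (Real.log (qPochInf q q)) (Real.log (1 - q))
      a b ha hb k hy)
  have hFx : F n x = uAux q (Real.log (qPochInf q q)) (Real.log (1 - q)) a b n x := by
    rw [hF]; exact hiter n x hx0
  rw [hFx, uAux_eq_of_two_le a b hn x]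
  exact hM x hx
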